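/- Zinkevich-style regret bound for online gradient descent with varying step sizes: suppose x(k+1) = Π_𝒳(x(k) − α(k)∇f_k(x(k))) with projection onto a closed convex set 𝒳 of diameter D, each f_k convex and differentiable with ‖∇f_k(x)‖ ≤ G on 𝒳, and α(k) > 0 nonincreasing. Then Σ_{k=1}^K (f_k(x(k)) − f_k(x*)) ≤ D²/(2α(K)) + (G²/2) Σ_{k=1}^K α(k) for any x* ∈ 𝒳. -/

import Mathlib

open scoped RealInnerProductSpace

lemma grad_lower_aux {E : Type*} [NormedAddCommGroup E] [InnerProductSpace ℝ E]
    [CompleteSpace E] {f : E → ℝ} (hc : ConvexOn ℝ Set.univ f) (hd : Differentiable ℝ f)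
    (a b : E) : f a + ⟪gradient f a, b - a⟫ ≤ f b := by
  have hF : HasFDerivAt f ((InnerProductSpace.toDual ℝ E) (gradient f a)) a :=
    hasGradientAt_iff_hasFDerivAt.mp (hd a).hasGradientAt
  have h0 : a + (0:ℝ) • (b - a) = a := by simp
  have hline : HasDerivAt (fun t : ℝ => a + t • (b - a)) (b - a) 0 := by
    simpa using ((hasDerivAt_id (0:ℝ)).smul_const (b - a)).const_add a
  have key : HasDerivAt (fun t : ℝ => f (a + t • (b - a))) (⟪gradient f a, b - a⟫) 0 := by
    have hF' : HasFDerivAt f ((InnerProductSpace.toDual ℝ E) (gradient f a))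
        (a + (0:ℝ) • (b - a)) := by rw [h0]; exact hF
    exact (hF'.comp_hasDerivAt 0 hline).congr_deriv (by simp only [InnerProductSpace.toDual_apply_apply])
  have hconvφ : ConvexOn ℝ Set.univ (fun t : ℝ => f (a + t • (b - a))) := by
    have h := hc.comp_affineMap (AffineMap.lineMap a b : ℝ →ᵃ[ℝ] E)
    have he : (fun t : ℝ => f (a + t • (b - a))) =
        (f ∘ (AffineMap.lineMap a b : ℝ →ᵃ[ℝ] E)) := by
      funext t
      simp [AffineMap.lineMap_apply, add_comm]
    rw [he]
    simpa using h
  have hslope := hconvφ.le_slope_of_hasDerivAt (Set.mem_univ 0) (Set.mem_univ 1) one_pos key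
  rw [slope_def_field] at hslope
  simp at hslope ⊢
  linarith

lemma proj_contract_aux {E : Type*} [NormedAddCommGroup E] [InnerProductSpace ℝ E]
    {X : Set E} (hXcv : Convex ℝ X) {y v w : E} (hv : v ∈ X) (hw : w ∈ X)
    (hmin : ∀ z ∈ X, ‖v - y‖ ≤ ‖z - y‖) : ‖v - w‖ ≤ ‖y - w‖ := by
  haveI : Nonempty X := ⟨⟨v, hv⟩⟩
  have heq : ‖y - v‖ = ⨅ z : X, ‖y - z‖ := by
    apply le_antisymm
    · exact le_ciInf fun z => by
        simpa [norm_sub_rev] using hmin z z.2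
    · exact ciInf_le ⟨0, fun _ ⟨z, hz⟩ => hz ▸ norm_nonneg _⟩ (⟨v, hv⟩ : X)
  have hvi := (norm_eq_iInf_iff_real_inner_le_zero hXcv hv).mp heq w hw
  have h1 : ‖v - w‖ ^ 2 = ‖y - w‖ ^ 2 - 2 * ⟪y - w, y - v⟫ + ‖y - v‖ ^ 2 := by
    have hvw : v - w = (y - w) - (y - v) := by abel
    rw [hvw, norm_sub_sq_real]
  have h2 : ⟪y - v, w - v⟫ = ‖y - v‖ ^ 2 - ⟪y - v, y - w⟫ := by
    have hwv : w - v = (y - v) - (y - w) := by abel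
    rw [hwv, inner_sub_right, real_inner_self_eq_norm_sq]
  have h3 : ⟪y - w, y - v⟫ = ⟪y - v, y - w⟫ := real_inner_comm _ _
  nlinarith [norm_nonneg (v - w), norm_nonneg (y - w), sq_nonneg (‖y - v‖)]

theorem zinkevich_regret_bound (n K : ℕ) (hK : 1 ≤ K)
    (X : Set (EuclideanSpace ℝ (Fin n)))
    (hXne : X.Nonempty) (hXcl : IsClosed X) (hXcv : Convex ℝ X)
    (D G : ℝ) (hD : ∀ u ∈ X, ∀ v ∈ X, ‖u - v‖ ≤ D)
    (f : ℕ → EuclideanSpace ℝ (Fin n) → ℝ)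
    (hconv : ∀ k, ConvexOn ℝ Set.univ (f k))
    (hdiff : ∀ k, Differentiable ℝ (f k))
    (hG : ∀ k, ∀ z ∈ X, ‖gradient (f k) z‖ ≤ G)
    (α : ℕ → ℝ) (hα : ∀ k, 0 < α k) (hmono : ∀ k, α (k + 1) ≤ α k)
    (x : ℕ → EuclideanSpace ℝ (Fin n)) (hx1 : x 1 ∈ X)
    (hproj : ∀ k, x (k + 1) ∈ X ∧
      ∀ w ∈ X, ‖x (k + 1) - (x k - α k • gradient (f k) (x k))‖ ≤
        ‖w - (x k - α k • gradient (f k) (x k))‖)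
    (xstar : EuclideanSpace ℝ (Fin n)) (hxstar : xstar ∈ X) :
    ∑ k ∈ Finset.Icc 1 K, (f k (x k) - f k xstar) ≤
      D ^ 2 / (2 * α K) + G ^ 2 / 2 * ∑ k ∈ Finset.Icc 1 K, α k := by
  set A : ℕ → ℝ := fun j => ‖x j - xstar‖ ^ 2 with hA
  have hmem : ∀ k, 1 ≤ k → x k ∈ X := by
    intro k hk
    obtain ⟨j, rfl⟩ : ∃ j, k = j + 1 := ⟨k - 1, (Nat.succ_pred_eq_of_pos hk).symm⟩
    exact (hproj j).1
  have hAle : ∀ k, 1 ≤ k → A k ≤ D ^ 2 := fun k hk =>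
    pow_le_pow_left₀ (norm_nonneg _) (hD _ (hmem k hk) _ hxstar) 2
  have hAnn : ∀ k, 0 ≤ A k := fun k => sq_nonneg _
  -- per-step inequality
  have hstep : ∀ k, 1 ≤ k →
      f k (x k) - f k xstar ≤ (A k - A (k + 1)) / (2 * α k) + α k / 2 * G ^ 2 := by
    intro k hk
    set g := gradient (f k) (x k) with hg
    have hgrad : f k (x k) - f k xstar ≤ ⟪g, x k - xstar⟫ := by
      have := grad_lower_aux (hconv k) (hdiff k) (x k) xstar
      have hi : ⟪g, xstar - x k⟫ = -⟪g, x k - xstar⟫ := by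
        rw [show xstar - x k = -(x k - xstar) by abel, inner_neg_right]
      rw [hi] at this
      linarith
    have hcontr : ‖x (k + 1) - xstar‖ ≤ ‖(x k - α k • g) - xstar‖ :=
      proj_contract_aux hXcv (hproj k).1 hxstar (hproj k).2
    have hsq : A (k + 1) ≤ A k - 2 * α k * ⟪g, x k - xstar⟫ + α k ^ 2 * ‖g‖ ^ 2 := by
      have hrw : (x k - α k • g) - xstar = (x k - xstar) - α k • g := by abel
      have hexp : ‖(x k - xstar) - α k • g‖ ^ 2
          = A k - 2 * (α k * ⟪x k - xstar, g⟫) + α k ^ 2 * ‖g‖ ^ 2 := by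
        rw [norm_sub_sq_real, real_inner_smul_right, norm_smul]
        rw [Real.norm_eq_abs, abs_of_pos (hα k)]
        ring
      have hb := pow_le_pow_left₀ (norm_nonneg _) hcontr 2
      rw [hrw, hexp] at hb
      rw [real_inner_comm g (x k - xstar)] at hb
      calc A (k + 1) ≤ _ := hb
        _ = A k - 2 * α k * ⟪g, x k - xstar⟫ + α k ^ 2 * ‖g‖ ^ 2 := by ring
    have hg2 : ‖g‖ ^ 2 ≤ G ^ 2 :=
      pow_le_pow_left₀ (norm_nonneg _) (hG k _ (hmem k hk)) 2
    have h2α : (0 : ℝ) < 2 * α k := mul_pos two_pos (hα k)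
    have hdiv : f k (x k) - f k xstar - α k / 2 * G ^ 2 ≤ (A k - A (k + 1)) / (2 * α k) := by
      rw [le_div_iff₀ h2α]
      nlinarith [mul_le_mul_of_nonneg_left hg2 (sq_nonneg (α k)),
        mul_le_mul_of_nonneg_left hgrad (le_of_lt h2α)]
    linarith
  -- Abel-type summation bound
  have habel : ∀ K', 1 ≤ K' → ∑ k ∈ Finset.Icc 1 K', (A k - A (k + 1)) / (2 * α k)
      ≤ (D ^ 2 - A (K' + 1)) / (2 * α K') := by
    intro K' hK'
    induction K', hK' using Nat.le_induction with
    | base =>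
      simp only [Finset.Icc_self, Finset.sum_singleton]
      gcongr
      · exact (mul_pos two_pos (hα 1)).le
      · exact hAle 1 le_rfl
    | succ m hm ih =>
      rw [Finset.sum_Icc_succ_top (by omega : 1 ≤ m + 1)]
      have h1 : (D ^ 2 - A (m + 1)) / (2 * α m) ≤ (D ^ 2 - A (m + 1)) / (2 * α (m + 1)) := by
        apply div_le_div_of_nonneg_left _ (mul_pos two_pos (hα (m+1))) (by linarith [hmono m])
        · linarith [hAle (m + 1) (by omega)]
      have h2 : (D ^ 2 - A (m + 1)) / (2 * α (m + 1)) + (A (m + 1) - A (m + 2)) / (2 * α (m + 1))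
          = (D ^ 2 - A (m + 2)) / (2 * α (m + 1)) := by
        rw [← add_div]
        ring_nf
      linarith
  have hsum1 : ∑ k ∈ Finset.Icc 1 K, (f k (x k) - f k xstar)
      ≤ ∑ k ∈ Finset.Icc 1 K, ((A k - A (k + 1)) / (2 * α k) + α k / 2 * G ^ 2) := by
    apply Finset.sum_le_sum
    intro k hk
    exact hstep k (Finset.mem_Icc.mp hk).1
  rw [Finset.sum_add_distrib] at hsum1
  have hsum2 : ∑ k ∈ Finset.Icc 1 K, α k / 2 * G ^ 2
      = G ^ 2 / 2 * ∑ k ∈ Finset.Icc 1 K, α k := by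
    rw [Finset.mul_sum]
    exact Finset.sum_congr rfl fun k _ => by ring
  have hfin : (D ^ 2 - A (K + 1)) / (2 * α K) ≤ D ^ 2 / (2 * α K) := by
    gcongr
    · exact (mul_pos two_pos (hα K)).le
    · linarith [hAnn (K + 1)]
  calc ∑ k ∈ Finset.Icc 1 K, (f k (x k) - f k xstar)
      ≤ ∑ k ∈ Finset.Icc 1 K, (A k - A (k + 1)) / (2 * α k)
        + ∑ k ∈ Finset.Icc 1 K, α k / 2 * G ^ 2 := hsum1
    _ ≤ D ^ 2 / (2 * α K) + G ^ 2 / 2 * ∑ k ∈ Finset.Icc 1 K, α k := by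
        rw [hsum2]
        have := habel K hK
        linarith
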